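/- Let n = 2m with m ≥ 1, let t be an integer with 1 ≤ t ≤ m-1 such that m/gcd(m,t) is odd, and let γ : 𝔽₂^m → 𝔽₂ be a rotation symmetric Boolean function of algebraic degree d with d ≥ 3. Then the Boolean function f_t on 𝔽₂^n defined by f_t(x₀,…,x_{n-1}) = Σ_{i=0}^{n-1} (x_i·x_{i+t}·x_{i+m} + x_i·x_{i+t}) + Σ_{i=0}^{m-1} x_i·x_{i+m} + γ(x₀+x_m, x₁+x_{m+1}, …, x_{m-1}+x_{2m-1}) is rotation symmetric and has algebraic degree d. -/

import Mathlib

/-- A Boolean function `f` on `𝔽₂ⁿ` (coordinates indexed modulo `n`) is rotation symmetric if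
`f(x₁,…,x_{n-1},x₀) = f(x₀,…,x_{n-1})` for all `x`. -/
def RotationSymmetric {n : ℕ} (f : (ZMod n → ZMod 2) → ZMod 2) : Prop :=
  ∀ x : ZMod n → ZMod 2, f (fun i => x (i + 1)) = f x

/-- A Boolean function `f` on `𝔽₂ⁿ` has algebraic degree `d` if its (unique) algebraic normal
form — a multilinear polynomial over `𝔽₂` representing `f` — has total degree `d`. -/
def HasAlgebraicDegree {n : ℕ} (f : (ZMod n → ZMod 2) → ZMod 2) (d : ℕ) : Prop :=
  ∃ p : MvPolynomial (ZMod n) (ZMod 2),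
    (∀ s ∈ p.support, ∀ i, s i ≤ 1) ∧
    (∀ x, MvPolynomial.eval x p = f x) ∧
    p.totalDegree = d

set_option linter.unusedSectionVars false

namespace Statement4Aux

open Finset

lemma sum_range_natCast {n : ℕ} [NeZero n] {M : Type*} [AddCommMonoid M] (F : ZMod n → M) :
    ∑ i ∈ Finset.range n, F (i : ZMod n) = ∑ j : ZMod n, F j := by
  refine Finset.sum_nbij' (fun i => (i : ZMod n)) (fun a => a.val)
    (fun a _ => Finset.mem_univ _) (fun a _ => Finset.mem_range.2 (ZMod.val_lt a))
    (fun a ha => ZMod.val_natCast_of_lt (Finset.mem_range.1 ha))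
    (fun a _ => ZMod.natCast_rightInverse a) (fun a _ => rfl)

lemma sum_univ_shift {n : ℕ} [NeZero n] {M : Type*} [AddCommMonoid M] (F : ZMod n → M) :
    ∑ j : ZMod n, F (j + 1) = ∑ j : ZMod n, F j :=
  Fintype.sum_equiv (Equiv.addRight (1 : ZMod n)) _ F (fun _ => rfl)

lemma sum_range_shift {n : ℕ} [NeZero n] {M : Type*} [AddCommMonoid M] (F : ZMod n → M) :
    ∑ i ∈ Finset.range n, F ((i : ZMod n) + 1) = ∑ i ∈ Finset.range n, F (i : ZMod n) := by
  rw [sum_range_natCast (fun a => F (a + 1)), sum_range_natCast F, sum_univ_shift F]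

variable {m : ℕ} [NeZero m]

instance : NeZero (2 * m) := ⟨Nat.mul_ne_zero two_ne_zero (NeZero.ne m)⟩

omit [NeZero m] in
lemma m_add_m : (m : ZMod (2 * m)) + (m : ZMod (2 * m)) = 0 := by
  rw [← Nat.cast_add, ← two_mul, ZMod.natCast_self]

lemma add_m_add_m (a : ZMod (2 * m)) : a + (m : ZMod (2*m)) + (m : ZMod (2*m)) = a := by
  rw [add_assoc, m_add_m, add_zero]

/-- key: the cast of `(j+1).val` is `↑j.val + 1` possibly shifted by `m`. -/
lemma val_succ_cast (hm2 : 2 ≤ m) (j : ZMod m) :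
    (((j + 1 : ZMod m).val : ZMod (2*m)) = (j.val : ZMod (2*m)) + 1) ∨
    (((j + 1 : ZMod m).val : ZMod (2*m)) = (j.val : ZMod (2*m)) + 1 + (m : ZMod (2*m))) := by
  have h1 : (1 : ZMod m).val = 1 := by
    rw [ZMod.val_one_eq_one_mod, Nat.mod_eq_of_lt (by omega)]
  have hv : (j + 1 : ZMod m).val = (j.val + 1) % m := by rw [ZMod.val_add, h1]
  have hjlt : j.val < m := ZMod.val_lt j
  rcases Nat.lt_or_ge (j.val + 1) m with h | h
  · left
    rw [hv, Nat.mod_eq_of_lt h]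
    push_cast
    ring
  · right
    have h' : j.val + 1 = m := by omega
    have hm0 : (j.val + 1) % m = 0 := by rw [h', Nat.mod_self]
    rw [hv, hm0, Nat.cast_zero,
      show ((j.val : ZMod (2*m)) + 1 + (m : ZMod (2*m))) = ((j.val + 1 + m : ℕ) : ZMod (2*m)) from
        by push_cast; ring,
      show j.val + 1 + m = 2 * m from by omega, ZMod.natCast_self]

lemma pair_add {x : ZMod (2*m) → ZMod 2} {a b : ZMod (2*m)}
    (h : b = a ∨ b = a + (m : ZMod (2*m))) :
    x b + x (b + (m : ZMod (2*m))) = x a + x (a + (m : ZMod (2*m))) := by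
  rcases h with h | h <;> subst h
  · rfl
  · rw [add_m_add_m]; exact add_comm _ _

lemma pair_mul {x : ZMod (2*m) → ZMod 2} {a b : ZMod (2*m)}
    (h : b = a ∨ b = a + (m : ZMod (2*m))) :
    x b * x (b + (m : ZMod (2*m))) = x a * x (a + (m : ZMod (2*m))) := by
  rcases h with h | h <;> subst h
  · rfl
  · rw [add_m_add_m]; exact mul_comm _ _

end Statement4Aux

open Statement4Aux in
theorem statement4_part1 (m t : ℕ) (hm : 1 ≤ m) [NeZero m]
    (ht1 : 1 ≤ t) (ht2 : t ≤ m - 1)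
    (γ : (ZMod m → ZMod 2) → ZMod 2)
    (hγrot : ∀ z : ZMod m → ZMod 2, γ (fun i => z (i + 1)) = γ z)
    (f : (ZMod (2 * m) → ZMod 2) → ZMod 2)
    (hf : ∀ x : ZMod (2 * m) → ZMod 2,
      f x = ∑ i ∈ Finset.range (2 * m), (x i * x (i + t) * x (i + m) + x i * x (i + t)) +
        ∑ i ∈ Finset.range m, x i * x (i + m) +
        γ (fun j : ZMod m => x j.val + x (j.val + m : ZMod (2 * m)))) :
    ∀ x : ZMod (2 * m) → ZMod 2, f (fun i => x (i + 1)) = f x := by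
  intro x
  have hm2 : 2 ≤ m := by omega
  rw [hf (fun i => x (i + 1)), hf x]
  congr 1
  · congr 1
    · -- first sum
      refine Eq.trans (Finset.sum_congr rfl fun i _ => ?_) (sum_range_shift
        (fun a => x a * x (a + (t : ZMod (2*m))) * x (a + (m : ZMod (2*m)))
          + x a * x (a + (t : ZMod (2*m)))))
      show x ((i : ZMod (2*m)) + 1) * x (((i : ZMod (2*m)) + (t : ZMod (2*m))) + 1)
            * x (((i : ZMod (2*m)) + (m : ZMod (2*m))) + 1)
          + x ((i : ZMod (2*m)) + 1) * x (((i : ZMod (2*m)) + (t : ZMod (2*m))) + 1)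
        = _
      rw [show ((i : ZMod (2*m)) + (t : ZMod (2*m))) + 1
            = ((i : ZMod (2*m)) + 1) + (t : ZMod (2*m)) from by ring,
        show ((i : ZMod (2*m)) + (m : ZMod (2*m))) + 1
            = ((i : ZMod (2*m)) + 1) + (m : ZMod (2*m)) from by ring]
    · -- second sum
      have key : ∀ i ∈ Finset.range m,
          x ((i : ZMod (2*m)) + 1) * x (((i : ZMod (2*m)) + (m : ZMod (2*m))) + 1)
          = (fun j : ZMod m => x (j.val : ZMod (2*m))
              * x ((j.val : ZMod (2*m)) + (m : ZMod (2*m)))) ((i : ZMod m) + 1) := by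
        intro i hi
        have hiv : ((i : ZMod m)).val = i := ZMod.val_natCast_of_lt (Finset.mem_range.1 hi)
        have h := val_succ_cast (m := m) hm2 (i : ZMod m)
        rw [hiv] at h
        have := pair_mul (x := x) (a := (i : ZMod (2*m)) + 1)
          (b := ((((i : ZMod m) + 1).val : ℕ) : ZMod (2*m))) h
        rw [show ((i : ZMod (2*m)) + (m : ZMod (2*m))) + 1
              = ((i : ZMod (2*m)) + 1) + (m : ZMod (2*m)) from by ring]
        exact this.symm
      refine Eq.trans (Finset.sum_congr rfl key) ?_
      refine Eq.trans (sum_range_shift (fun j : ZMod m => x (j.val : ZMod (2*m))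
        * x ((j.val : ZMod (2*m)) + (m : ZMod (2*m))))) ?_
      refine Finset.sum_congr rfl fun i hi => ?_
      have hiv : ((i : ZMod m)).val = i := ZMod.val_natCast_of_lt (Finset.mem_range.1 hi)
      show x (((i : ZMod m).val : ℕ) : ZMod (2*m)) * _ = _
      rw [hiv]
  · -- gamma part
    have harg : (fun j : ZMod m => x ((j.val : ZMod (2*m)) + 1)
          + x (((j.val : ZMod (2*m)) + (m : ZMod (2*m))) + 1))
        = (fun j : ZMod m => (fun k : ZMod m => x (k.val : ZMod (2*m))
            + x ((k.val : ZMod (2*m)) + (m : ZMod (2*m)))) (j + 1)) := by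
      funext j
      have h := val_succ_cast (m := m) hm2 j
      have := pair_add (x := x) (a := (j.val : ZMod (2*m)) + 1)
        (b := (((j + 1 : ZMod m).val : ℕ) : ZMod (2*m))) h
      simp only []
      rw [show ((j.val : ZMod (2*m)) + (m : ZMod (2*m))) + 1
            = ((j.val : ZMod (2*m)) + 1) + (m : ZMod (2*m)) from by ring]
      exact this.symm
    show γ (fun j : ZMod m => x ((j.val : ZMod (2*m)) + 1)
        + x (((j.val : ZMod (2*m)) + (m : ZMod (2*m))) + 1)) = _
    rw [harg]
    exact hγrot (fun k : ZMod m => x (k.val : ZMod (2*m))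
      + x ((k.val : ZMod (2*m)) + (m : ZMod (2*m))))

set_option linter.unusedSectionVars false

namespace Statement4Aux

open Finset MvPolynomial

instance instNeZero2m {m : ℕ} [NeZero m] : NeZero (2 * m) :=
  ⟨Nat.mul_ne_zero two_ne_zero (NeZero.ne m)⟩

section generic
variable {α β σ : Type*} {R : Type*} [CommSemiring R]

lemma sum_single_apply [DecidableEq α] [DecidableEq β] {g : α → β} (hg : Function.Injective g)
    (T : Finset α) (j : α) :
    (∑ k ∈ T, Finsupp.single (g k) (1 : ℕ)) (g j) = if j ∈ T then 1 else 0 := by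
  rw [Finset.sum_apply']
  have : ∀ k ∈ T, (Finsupp.single (g k) (1:ℕ)) (g j) = if k = j then 1 else 0 := by
    intro k _
    rw [Finsupp.single_apply]
    simp [hg.eq_iff]
  rw [Finset.sum_congr rfl this, Finset.sum_ite_eq' T j (fun _ => 1)]

lemma sum_single_apply_ne [DecidableEq β] (g : α → β) (T : Finset α) {i : β}
    (h : ∀ j, g j ≠ i) :
    (∑ k ∈ T, Finsupp.single (g k) (1 : ℕ)) i = 0 := by
  rw [Finset.sum_apply']
  refine Finset.sum_eq_zero fun k _ => ?_
  rw [Finsupp.single_apply, if_neg (h k)]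

lemma sum_single_apply_le [DecidableEq α] [DecidableEq β] {g : α → β}
    (hg : Function.Injective g) (T : Finset α) (i : β) :
    (∑ k ∈ T, Finsupp.single (g k) (1 : ℕ)) i ≤ 1 := by
  by_cases h : ∃ j, g j = i
  · obtain ⟨j, rfl⟩ := h
    rw [sum_single_apply hg]
    split <;> omega
  · rw [sum_single_apply_ne g T (fun j hj => h ⟨j, hj⟩)]
    omega

lemma degree_sum_single (g : α → β) (T : Finset α) :
    (∑ j ∈ T, Finsupp.single (g j) (1 : ℕ)).sum (fun _ n => n) = T.card := by
  classical
  induction T using Finset.cons_induction with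
  | empty => simp
  | cons a T ha ih =>
    rw [Finset.sum_cons, Finsupp.sum_add_index' (fun _ => rfl) (fun _ _ _ => rfl),
      Finsupp.sum_single_index rfl, ih, Finset.card_cons]
    omega

lemma prod_X_eq_monomial (g : α → σ) (T : Finset α) :
    ∏ j ∈ T, (X (g j) : MvPolynomial σ R) = monomial (∑ j ∈ T, Finsupp.single (g j) 1) 1 := by
  classical
  induction T using Finset.cons_induction with
  | empty => simp
  | cons a T ha ih =>
    rw [Finset.prod_cons, Finset.sum_cons, ih, X, monomial_mul, one_mul]

lemma X_mul_X (a b : σ) :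
    (X a * X b : MvPolynomial σ R)
      = monomial (Finsupp.single a 1 + Finsupp.single b 1) 1 := by
  rw [X, X, monomial_mul, one_mul]

lemma X_mul_X_mul_X (a b c : σ) :
    (X a * X b * X c : MvPolynomial σ R)
      = monomial (Finsupp.single a 1 + Finsupp.single b 1 + Finsupp.single c 1) 1 := by
  rw [X_mul_X, X, monomial_mul, one_mul]

lemma triple_le_one [DecidableEq σ] {a b c : σ} (hab : a ≠ b) (hac : a ≠ c) (hbc : b ≠ c)
    (i : σ) :
    ((Finsupp.single a (1:ℕ) + Finsupp.single b 1 + Finsupp.single c 1 : σ →₀ ℕ)) i ≤ 1 := by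
  simp only [Finsupp.add_apply, Finsupp.single_apply]
  split_ifs <;> simp_all

lemma double_le_one [DecidableEq σ] {a b : σ} (hab : a ≠ b) (i : σ) :
    ((Finsupp.single a (1:ℕ) + Finsupp.single b 1 : σ →₀ ℕ)) i ≤ 1 := by
  simp only [Finsupp.add_apply, Finsupp.single_apply]
  split_ifs <;> simp_all

lemma triple_apply_third_ne_zero [DecidableEq σ] (a b c : σ) :
    ((Finsupp.single a (1:ℕ) + Finsupp.single b 1 + Finsupp.single c 1 : σ →₀ ℕ)) c ≠ 0 := by
  simp [Finsupp.add_apply, Finsupp.single_apply]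

lemma triple_apply_first_ne_zero [DecidableEq σ] (a b c : σ) :
    ((Finsupp.single a (1:ℕ) + Finsupp.single b 1 + Finsupp.single c 1 : σ →₀ ℕ)) a ≠ 0 := by
  simp [Finsupp.add_apply, Finsupp.single_apply]

lemma degree_triple (a b c : σ) :
    ((Finsupp.single a (1:ℕ) + Finsupp.single b 1 + Finsupp.single c 1).sum fun _ n => n) ≤ 3 := by
  classical
  rw [Finsupp.sum_add_index' (fun _ => rfl) (fun _ _ _ => rfl),
    Finsupp.sum_add_index' (fun _ => rfl) (fun _ _ _ => rfl),
    Finsupp.sum_single_index rfl, Finsupp.sum_single_index rfl, Finsupp.sum_single_index rfl]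

lemma ml_eq_of_support {s s' : α →₀ ℕ} (hs : ∀ i, s i ≤ 1) (hs' : ∀ i, s' i ≤ 1)
    (h : s.support = s'.support) : s = s' := by
  ext j
  by_cases hj : j ∈ s.support
  · have h1 : s j ≠ 0 := Finsupp.mem_support_iff.1 hj
    have h2 : s' j ≠ 0 := Finsupp.mem_support_iff.1 (h ▸ hj)
    have := hs j; have := hs' j
    omega
  · have h1 : s j = 0 := Finsupp.notMem_support_iff.1 hj
    have h2 : s' j = 0 := Finsupp.notMem_support_iff.1 (h ▸ hj)
    omega

end generic

section AB
variable {m : ℕ} [NeZero m]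

/-- lower-half embedding `ZMod m → ZMod (2m)` -/
def Am (j : ZMod m) : ZMod (2 * m) := (j.val : ZMod (2 * m))

/-- upper-half embedding -/
def Bm (j : ZMod m) : ZMod (2 * m) := (j.val : ZMod (2 * m)) + (m : ZMod (2 * m))

lemma mlt2m : m < 2 * m := by have := NeZero.pos m; omega

lemma Am_val (j : ZMod m) : (Am j).val = j.val :=
  ZMod.val_natCast_of_lt (lt_trans (ZMod.val_lt j) mlt2m)

lemma Bm_val (j : ZMod m) : (Bm j).val = j.val + m := by
  have : Bm j = ((j.val + m : ℕ) : ZMod (2 * m)) := by rw [Bm]; push_cast; ring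
  rw [this]
  exact ZMod.val_natCast_of_lt (by have := ZMod.val_lt j; omega)

lemma Am_val_lt (j : ZMod m) : (Am j).val < m := by rw [Am_val]; exact ZMod.val_lt j

lemma Bm_val_ge (j : ZMod m) : m ≤ (Bm j).val := by rw [Bm_val]; omega

lemma Am_inj : Function.Injective (Am (m := m)) := fun a b h =>
  ZMod.val_injective _ (by rw [← Am_val (m := m) a, ← Am_val (m := m) b, h])

lemma Bm_inj : Function.Injective (Bm (m := m)) := fun a b h => by
  have : (Bm a).val = (Bm b).val := by rw [h]
  rw [Bm_val, Bm_val] at this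
  exact ZMod.val_injective _ (by omega)

lemma Am_ne_Bm (j k : ZMod m) : Am j ≠ Bm k := fun h => by
  have := Am_val_lt j
  have := Bm_val_ge k
  rw [← h] at this
  omega

/-- the exponent finsupp given a support set `S` and a subset `T` of chosen "lower" indices -/
noncomputable def eAB (S T : Finset (ZMod m)) : ZMod (2 * m) →₀ ℕ :=
  (∑ j ∈ T, Finsupp.single (Am j) 1) + (∑ j ∈ S \ T, Finsupp.single (Bm j) 1)

lemma eAB_le_one (S T : Finset (ZMod m)) (i : ZMod (2 * m)) : eAB S T i ≤ 1 := by
  rw [eAB, Finsupp.add_apply]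
  rcases Nat.lt_or_ge i.val m with h | h
  · have h2 : (∑ j ∈ S \ T, Finsupp.single (Bm j) (1:ℕ)) i = 0 :=
      sum_single_apply_ne _ _ (fun j hj => by have := Bm_val_ge j; rw [hj] at this; omega)
    have h1 := sum_single_apply_le (Am_inj (m := m)) T i
    omega
  · have h1 : (∑ j ∈ T, Finsupp.single (Am j) (1:ℕ)) i = 0 :=
      sum_single_apply_ne _ _ (fun j hj => by have := Am_val_lt j; rw [hj] at this; omega)
    have h2 := sum_single_apply_le (Bm_inj (m := m)) (S \ T) i
    omega

lemma eAB_degree {S T : Finset (ZMod m)} (hT : T ⊆ S) :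
    (eAB S T).sum (fun _ n => n) = S.card := by
  rw [eAB, Finsupp.sum_add_index' (fun _ => rfl) (fun _ _ _ => rfl),
    degree_sum_single, degree_sum_single, Finset.card_sdiff_of_subset hT]
  have := Finset.card_le_card hT
  omega

lemma eAB_full (S : Finset (ZMod m)) :
    eAB S S = ∑ j ∈ S, Finsupp.single (Am j) 1 := by
  rw [eAB, Finset.sdiff_self, Finset.sum_empty, add_zero]

lemma eAB_apply_of_ge {v : ZMod (2 * m)} (hv : m ≤ v.val) (S : Finset (ZMod m)) :
    eAB S S v = 0 := by
  rw [eAB_full]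
  exact sum_single_apply_ne _ _ (fun j hj => by have := Am_val_lt j; rw [hj] at this; omega)

lemma prod_lin (S : Finset (ZMod m)) :
    (∏ j ∈ S, (X (Am j) + X (Bm j) : MvPolynomial (ZMod (2 * m)) (ZMod 2)))
      = ∑ T ∈ S.powerset, monomial (eAB S T) 1 := by
  rw [Finset.prod_add]
  refine Finset.sum_congr rfl fun T hT => ?_
  rw [prod_X_eq_monomial, prod_X_eq_monomial, monomial_mul, one_mul, eAB]

lemma eAB_eq_iff {S S' T : Finset (ZMod m)} (hT : T ⊆ S) :
    eAB S T = eAB S' S' ↔ (S = S' ∧ T = S) := by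
  constructor
  · intro h
    have hTS : T = S := by
      refine Finset.Subset.antisymm hT (fun j hjS => ?_)
      by_contra hjT
      have hj : j ∈ S \ T := Finset.mem_sdiff.2 ⟨hjS, hjT⟩
      have happ := congrArg (fun e : ZMod (2*m) →₀ ℕ => e (Bm j)) h
      rw [eAB_apply_of_ge (Bm_val_ge j)] at happ
      rw [eAB, Finsupp.add_apply] at happ
      have h1 : (∑ k ∈ T, Finsupp.single (Am k) (1:ℕ)) (Bm j) = 0 :=
        sum_single_apply_ne _ _ (fun k => Am_ne_Bm k j)
      have h2 : (∑ k ∈ S \ T, Finsupp.single (Bm k) (1:ℕ)) (Bm j) = 1 := by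
        rw [sum_single_apply (Bm_inj (m := m)), if_pos hj]
      rw [h1, h2] at happ
      exact one_ne_zero happ
    subst hTS
    refine ⟨?_, rfl⟩
    rw [eAB_full, eAB_full] at h
    ext j
    have happ := congrArg (fun e : ZMod (2*m) →₀ ℕ => e (Am j)) h
    rw [sum_single_apply (Am_inj (m := m)), sum_single_apply (Am_inj (m := m))] at happ
    constructor <;> intro hj
    · by_contra hj'
      rw [if_pos hj, if_neg hj'] at happ
      exact one_ne_zero happ
    · by_contra hj'
      rw [if_neg hj', if_pos hj] at happ
      exact one_ne_zero happ.symm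
  · rintro ⟨rfl, rfl⟩
    rfl

end AB

end Statement4Aux

namespace Statement4Aux
open Finset MvPolynomial

set_option maxHeartbeats 1000000

section polys
variable (m t : ℕ) [NeZero m]

noncomputable def PA : MvPolynomial (ZMod (2 * m)) (ZMod 2) :=
  ∑ i ∈ Finset.range (2 * m),
    X ((i : ZMod (2*m))) * X ((i : ZMod (2*m)) + (t : ZMod (2*m)))
      * X ((i : ZMod (2*m)) + (m : ZMod (2*m)))

noncomputable def PB : MvPolynomial (ZMod (2 * m)) (ZMod 2) :=
  ∑ i ∈ Finset.range (2 * m),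
    X ((i : ZMod (2*m))) * X ((i : ZMod (2*m)) + (t : ZMod (2*m)))

noncomputable def PC : MvPolynomial (ZMod (2 * m)) (ZMod 2) :=
  ∑ i ∈ Finset.range m,
    X ((i : ZMod (2*m))) * X ((i : ZMod (2*m)) + (m : ZMod (2*m)))

noncomputable def wA (i : ℕ) : ZMod (2*m) →₀ ℕ :=
  Finsupp.single ((i : ZMod (2*m))) 1
    + Finsupp.single ((i : ZMod (2*m)) + (t : ZMod (2*m))) 1
    + Finsupp.single ((i : ZMod (2*m)) + (m : ZMod (2*m))) 1

noncomputable def wB (i : ℕ) : ZMod (2*m) →₀ ℕ :=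
  Finsupp.single ((i : ZMod (2*m))) 1
    + Finsupp.single ((i : ZMod (2*m)) + (t : ZMod (2*m))) 1

noncomputable def wC (i : ℕ) : ZMod (2*m) →₀ ℕ :=
  Finsupp.single ((i : ZMod (2*m))) 1
    + Finsupp.single ((i : ZMod (2*m)) + (m : ZMod (2*m))) 1

noncomputable def PG (q : MvPolynomial (ZMod m) (ZMod 2)) :
    MvPolynomial (ZMod (2 * m)) (ZMod 2) :=
  eval₂ C (fun j => X (Am j) + X (Bm j)) q

end polys

section polyfacts
variable {m t : ℕ} [NeZero m]

lemma PA_eq : PA m t = ∑ i ∈ Finset.range (2*m), monomial (wA m t i) (1 : ZMod 2) :=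
  Finset.sum_congr rfl fun i _ => X_mul_X_mul_X _ _ _

lemma PB_eq : PB m t = ∑ i ∈ Finset.range (2*m), monomial (wB m t i) (1 : ZMod 2) :=
  Finset.sum_congr rfl fun i _ => X_mul_X _ _

lemma PC_eq : PC m = ∑ i ∈ Finset.range m, monomial (wC m i) (1 : ZMod 2) :=
  Finset.sum_congr rfl fun i _ => X_mul_X _ _

lemma cast_m_ne_zero : (m : ZMod (2*m)) ≠ 0 := by
  intro h
  have := congrArg ZMod.val h
  rw [ZMod.val_natCast_of_lt mlt2m, ZMod.val_zero] at this
  exact (NeZero.ne m) this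

lemma cast_t_ne_zero (ht1 : 1 ≤ t) (htm : t < m) : (t : ZMod (2*m)) ≠ 0 := by
  intro h
  have := congrArg ZMod.val h
  rw [ZMod.val_natCast_of_lt (lt_trans htm mlt2m), ZMod.val_zero] at this
  omega

lemma cast_t_ne_cast_m (htm : t < m) : (t : ZMod (2*m)) ≠ (m : ZMod (2*m)) := by
  intro h
  have := congrArg ZMod.val h
  rw [ZMod.val_natCast_of_lt (lt_trans htm mlt2m), ZMod.val_natCast_of_lt mlt2m] at this
  omega

lemma wA_le_one (ht1 : 1 ≤ t) (htm : t < m) (i : ℕ) (k : ZMod (2*m)) : wA m t i k ≤ 1 := by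
  refine triple_le_one ?_ ?_ ?_ k
  · intro h
    exact cast_t_ne_zero ht1 htm (left_eq_add.1 h)
  · intro h
    exact cast_m_ne_zero (m := m) ((left_eq_add.1 h))
  · intro h
    exact cast_t_ne_cast_m htm (add_right_injective _ h)

lemma wB_le_one (ht1 : 1 ≤ t) (htm : t < m) (i : ℕ) (k : ZMod (2*m)) : wB m t i k ≤ 1 := by
  refine double_le_one (fun h => ?_) k
  exact cast_t_ne_zero ht1 htm (left_eq_add.1 h)

lemma wC_le_one (i : ℕ) (k : ZMod (2*m)) : wC m i k ≤ 1 := by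
  refine double_le_one (fun h => ?_) k
  exact cast_m_ne_zero (m := m) (left_eq_add.1 h)

lemma eval_PA (x : ZMod (2*m) → ZMod 2) :
    eval x (PA m t) = ∑ i ∈ Finset.range (2*m),
      x (i : ZMod (2*m)) * x ((i : ZMod (2*m)) + (t : ZMod (2*m)))
        * x ((i : ZMod (2*m)) + (m : ZMod (2*m))) := by
  rw [PA, map_sum]
  simp

lemma eval_PB (x : ZMod (2*m) → ZMod 2) :
    eval x (PB m t) = ∑ i ∈ Finset.range (2*m),
      x (i : ZMod (2*m)) * x ((i : ZMod (2*m)) + (t : ZMod (2*m))) := by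
  rw [PB, map_sum]
  simp

lemma eval_PC (x : ZMod (2*m) → ZMod 2) :
    eval x (PC m) = ∑ i ∈ Finset.range m,
      x (i : ZMod (2*m)) * x ((i : ZMod (2*m)) + (m : ZMod (2*m))) := by
  rw [PC, map_sum]
  simp

lemma eval_PG (q : MvPolynomial (ZMod m) (ZMod 2)) (x : ZMod (2*m) → ZMod 2) :
    eval x (PG m q) = eval (fun j => x (Am j) + x (Bm j)) q := by
  rw [PG, eval_eval₂]
  have h1 : (MvPolynomial.eval x).comp (C : ZMod 2 →+* MvPolynomial (ZMod (2*m)) (ZMod 2))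
      = RingHom.id (ZMod 2) := RingHom.ext fun c => by simp
  rw [h1]
  have h2 : (fun s => eval x ((fun j : ZMod m => (X (Am j) + X (Bm j) :
      MvPolynomial (ZMod (2*m)) (ZMod 2))) s)) = fun j => x (Am j) + x (Bm j) := by
    funext j
    simp
  rw [h2, eval₂_id]

lemma PG_eq {q : MvPolynomial (ZMod m) (ZMod 2)} (hml : ∀ s ∈ q.support, ∀ i, s i ≤ 1) :
    PG m q = ∑ s ∈ q.support, ∑ T ∈ s.support.powerset,
      monomial (eAB s.support T) (1 : ZMod 2) := by
  conv_lhs => rw [PG, ← support_sum_monomial_coeff q]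
  rw [eval₂_sum]
  refine Finset.sum_congr rfl fun s hs => ?_
  have hc : coeff s q = 1 := by
    have h0 : coeff s q ≠ 0 := mem_support_iff.1 hs
    revert h0
    generalize coeff s q = c
    revert c
    decide
  rw [eval₂_monomial, hc, map_one, one_mul]
  have : (s.prod fun j e => ((X (Am j) + X (Bm j) :
      MvPolynomial (ZMod (2*m)) (ZMod 2))) ^ e)
      = ∏ j ∈ s.support, (X (Am j) + X (Bm j)) := by
    rw [Finsupp.prod]
    refine Finset.prod_congr rfl fun j hj => ?_
    have h1 : s j = 1 := by
      have := hml s hs j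
      have := Finsupp.mem_support_iff.1 hj
      omega
    show (X (Am j) + X (Bm j) : MvPolynomial (ZMod (2*m)) (ZMod 2)) ^ (s j) = _
    rw [h1, pow_one]
  rw [this, prod_lin]

lemma PG_ml {q : MvPolynomial (ZMod m) (ZMod 2)} (hml : ∀ s ∈ q.support, ∀ i, s i ≤ 1) :
    ∀ s' ∈ (PG m q).support, ∀ k, s' k ≤ 1 := by
  intro s' hs' k
  rw [PG_eq hml] at hs'
  obtain ⟨s, hs, hs'2⟩ := Finset.mem_biUnion.1 (support_sum hs')
  obtain ⟨T, hT, hs'3⟩ := Finset.mem_biUnion.1 (support_sum hs'2)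
  have := support_monomial_subset hs'3
  rw [Finset.mem_singleton] at this
  subst this
  exact eAB_le_one _ _ _

lemma PG_deg {q : MvPolynomial (ZMod m) (ZMod 2)} (hml : ∀ s ∈ q.support, ∀ i, s i ≤ 1) :
    (PG m q).totalDegree ≤ q.totalDegree := by
  rw [PG_eq hml]
  refine le_trans (totalDegree_finset_sum _ _) (Finset.sup_le fun s hs => ?_)
  refine le_trans (totalDegree_finset_sum _ _) (Finset.sup_le fun T hT => ?_)
  refine le_trans (totalDegree_monomial_le _ _) ?_
  show ((eAB s.support T).sum fun _ n => n) ≤ _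
  rw [eAB_degree (Finset.mem_powerset.1 hT)]
  have h1 : s.support.card ≤ s.sum fun _ e => e := by
    rw [Finset.card_eq_sum_ones, Finsupp.sum]
    exact Finset.sum_le_sum fun j hj =>
      Nat.one_le_iff_ne_zero.2 (Finsupp.mem_support_iff.1 hj)
  exact le_trans h1 (le_totalDegree hs)

lemma coeff_PG {q : MvPolynomial (ZMod m) (ZMod 2)} (hml : ∀ s ∈ q.support, ∀ i, s i ≤ 1)
    {s₀ : ZMod m →₀ ℕ} (hs₀ : s₀ ∈ q.support) :
    coeff (eAB s₀.support s₀.support) (PG m q) = 1 := by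
  rw [PG_eq hml, coeff_sum]
  rw [Finset.sum_eq_single s₀]
  · rw [coeff_sum]
    have hcong : ∀ T ∈ s₀.support.powerset,
        coeff (eAB s₀.support s₀.support) (monomial (eAB s₀.support T) (1 : ZMod 2))
          = if T = s₀.support then 1 else 0 := by
      intro T hT
      rw [coeff_monomial]
      congr 1
      rw [eq_iff_iff]
      rw [eAB_eq_iff (Finset.mem_powerset.1 hT)]
      constructor
      · rintro ⟨-, h⟩; exact h
      · rintro rfl; exact ⟨rfl, rfl⟩
    rw [Finset.sum_congr rfl hcong, Finset.sum_ite_eq' _ _ (fun _ => (1 : ZMod 2)),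
      if_pos (Finset.mem_powerset_self _)]
  · intro s hs hne
    rw [coeff_sum]
    refine Finset.sum_eq_zero fun T hT => ?_
    rw [coeff_monomial, if_neg]
    intro h
    obtain ⟨hsupp, hTs⟩ := (eAB_eq_iff (Finset.mem_powerset.1 hT)).1 h
    exact hne (ml_eq_of_support (hml s hs) (hml s₀ hs₀) hsupp)
  · intro h
    exact absurd hs₀ h

lemma coeff_A_zero (ht1 : 1 ≤ t) (htm : t < m) (S : Finset (ZMod m)) :
    coeff (eAB S S) (PA m t) = 0 := by
  rw [PA_eq, coeff_sum]
  refine Finset.sum_eq_zero fun i hi => ?_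
  rw [coeff_monomial, if_neg]
  intro h
  have hi2m : i < 2 * m := Finset.mem_range.1 hi
  rcases Nat.lt_or_ge i m with hc | hc
  · -- use the point ↑i + ↑m, whose val is i + m ≥ m
    have happ := congrArg (fun e : ZMod (2*m) →₀ ℕ => e ((i : ZMod (2*m)) + (m : ZMod (2*m)))) h
    have hv : m ≤ ((i : ZMod (2*m)) + (m : ZMod (2*m))).val := by
      have heq : ((i : ZMod (2*m)) + (m : ZMod (2*m))) = ((i + m : ℕ) : ZMod (2*m)) := by
        push_cast; ring
      rw [heq, ZMod.val_natCast_of_lt (by omega)]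
      omega
    rw [eAB_apply_of_ge hv] at happ
    exact triple_apply_third_ne_zero _ _ _ happ
  · -- use the point ↑i, whose val is i ≥ m
    have happ := congrArg (fun e : ZMod (2*m) →₀ ℕ => e ((i : ZMod (2*m)))) h
    have hv : m ≤ ((i : ZMod (2*m))).val := by
      rw [ZMod.val_natCast_of_lt hi2m]; omega
    rw [eAB_apply_of_ge hv] at happ
    exact triple_apply_first_ne_zero _ _ _ happ

lemma PA_deg : (PA m t).totalDegree ≤ 3 := by
  rw [PA_eq]
  refine le_trans (totalDegree_finset_sum _ _) (Finset.sup_le fun i _ => ?_)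
  exact le_trans (totalDegree_monomial_le _ _) (degree_triple _ _ _)

lemma PB_deg : (PB m t).totalDegree ≤ 2 := by
  refine le_trans (totalDegree_finset_sum _ _) (Finset.sup_le fun i _ => ?_)
  calc (X ((i : ZMod (2*m))) * X ((i : ZMod (2*m)) + (t : ZMod (2*m))) :
        MvPolynomial (ZMod (2*m)) (ZMod 2)).totalDegree
      ≤ _ + _ := totalDegree_mul _ _
    _ ≤ 2 := by rw [totalDegree_X, totalDegree_X]

lemma PC_deg : (PC m).totalDegree ≤ 2 := by
  refine le_trans (totalDegree_finset_sum _ _) (Finset.sup_le fun i _ => ?_)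
  calc (X ((i : ZMod (2*m))) * X ((i : ZMod (2*m)) + (m : ZMod (2*m))) :
        MvPolynomial (ZMod (2*m)) (ZMod 2)).totalDegree
      ≤ _ + _ := totalDegree_mul _ _
    _ ≤ 2 := by rw [totalDegree_X, totalDegree_X]

end polyfacts

end Statement4Aux

open Statement4Aux MvPolynomial in
theorem statement4_part2 (m t : ℕ) (hm : 1 ≤ m) [NeZero m]
    (ht1 : 1 ≤ t) (ht2 : t ≤ m - 1)
    (d : ℕ) (hd : 3 ≤ d)
    (γ : (ZMod m → ZMod 2) → ZMod 2)
    (hγdeg : ∃ q : MvPolynomial (ZMod m) (ZMod 2),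
      (∀ s ∈ q.support, ∀ i, s i ≤ 1) ∧
      (∀ x, MvPolynomial.eval x q = γ x) ∧
      q.totalDegree = d)
    (f : (ZMod (2 * m) → ZMod 2) → ZMod 2)
    (hf : ∀ x : ZMod (2 * m) → ZMod 2,
      f x = ∑ i ∈ Finset.range (2 * m), (x i * x (i + t) * x (i + m) + x i * x (i + t)) +
        ∑ i ∈ Finset.range m, x i * x (i + m) +
        γ (fun j : ZMod m => x j.val + x (j.val + m : ZMod (2 * m)))) :
    ∃ p : MvPolynomial (ZMod (2*m)) (ZMod 2),
      (∀ s ∈ p.support, ∀ i, s i ≤ 1) ∧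
      (∀ x, MvPolynomial.eval x p = f x) ∧
      p.totalDegree = d := by
  classical
  obtain ⟨q, hq_ml, hq_eval, hq_deg⟩ := hγdeg
  have hm2 : 2 ≤ m := by omega
  have htm : t < m := by omega
  refine ⟨PA m t + PB m t + PC m + PG m q, ?_, ?_, ?_⟩
  · -- multilinearity
    intro s hs k
    rcases Finset.mem_union.1 (support_add hs) with hs' | hsG
    · rcases Finset.mem_union.1 (support_add hs') with hs'' | hsC
      · rcases Finset.mem_union.1 (support_add hs'') with hsA | hsB
        · rw [PA_eq] at hsA
          obtain ⟨i, hi, h2⟩ := Finset.mem_biUnion.1 (support_sum hsA)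
          have h3 := Finset.mem_singleton.1 (support_monomial_subset h2)
          subst h3
          exact wA_le_one ht1 htm i k
        · rw [PB_eq] at hsB
          obtain ⟨i, hi, h2⟩ := Finset.mem_biUnion.1 (support_sum hsB)
          have h3 := Finset.mem_singleton.1 (support_monomial_subset h2)
          subst h3
          exact wB_le_one ht1 htm i k
      · rw [PC_eq] at hsC
        obtain ⟨i, hi, h2⟩ := Finset.mem_biUnion.1 (support_sum hsC)
        have h3 := Finset.mem_singleton.1 (support_monomial_subset h2)
        subst h3
        exact wC_le_one i k
    · exact PG_ml hq_ml s hsG k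
  · -- evaluation
    intro x
    rw [hf x, map_add, map_add, map_add, eval_PA, eval_PB, eval_PC, eval_PG,
      hq_eval (fun j => x (Am j) + x (Bm j)), ← Finset.sum_add_distrib]
    rfl
  · -- total degree
    refine le_antisymm ?_ ?_
    · refine le_trans (totalDegree_add _ _) (max_le (le_trans (totalDegree_add _ _)
        (max_le (le_trans (totalDegree_add _ _) (max_le ?_ ?_)) ?_)) ?_)
      · exact le_trans PA_deg hd
      · exact le_trans PB_deg (by omega)
      · exact le_trans PC_deg (by omega)
      · exact le_trans (PG_deg hq_ml) (le_of_eq hq_deg)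
    · -- lower bound
      have hq0 : q ≠ 0 := by
        intro h
        rw [h, totalDegree_zero] at hq_deg
        omega
      obtain ⟨s₀, hs₀, hs₀d⟩ := Finset.exists_mem_eq_sup q.support
        (MvPolynomial.support_nonempty.2 hq0) (fun s => s.sum fun _ e => e)
      have hdeg : (s₀.sum fun _ e => e) = d := by
        rw [← hq_deg]
        exact hs₀d.symm
      have hcard : s₀.support.card = d := by
        rw [← hdeg, Finsupp.sum, Finset.card_eq_sum_ones]
        refine Finset.sum_congr rfl fun j hj => ?_
        have h1 := hq_ml s₀ hs₀ j
        have h2 := Finsupp.mem_support_iff.1 hj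
        omega
      have hud : ((eAB s₀.support s₀.support).sum fun _ n => n) = d := by
        rw [eAB_degree (Finset.Subset.refl _), hcard]
      have hud' : (∑ i ∈ (eAB s₀.support s₀.support).support,
          eAB s₀.support s₀.support i) = d := hud
      have hB : coeff (eAB s₀.support s₀.support) (PB m t) = 0 := by
        refine coeff_eq_zero_of_totalDegree_lt ?_
        rw [hud']
        exact lt_of_le_of_lt PB_deg (by omega)
      have hC : coeff (eAB s₀.support s₀.support) (PC m) = 0 := by
        refine coeff_eq_zero_of_totalDegree_lt ?_
        rw [hud']
        exact lt_of_le_of_lt PC_deg (by omega)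
      have hcoeff : coeff (eAB s₀.support s₀.support) (PA m t + PB m t + PC m + PG m q) = 1 := by
        rw [coeff_add, coeff_add, coeff_add, coeff_PG hq_ml hs₀,
          coeff_A_zero ht1 htm, hB, hC]
        norm_num
      have hmem : eAB s₀.support s₀.support ∈ (PA m t + PB m t + PC m + PG m q).support :=
        MvPolynomial.mem_support_iff.2 (by rw [hcoeff]; exact one_ne_zero)
      have := le_totalDegree hmem
      rw [hud] at this
      exact this

/-- with `n = 2m`, `m ≥ 1`, `1 ≤ t ≤ m-1` with `m / gcd(m,t)` odd, and `γ` a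
rotation symmetric Boolean function on `𝔽₂^m` of algebraic degree `d ≥ 3`, the function
`f_t(x) = Σ_{i=0}^{n-1} (xᵢ·x_{i+t}·x_{i+m} + xᵢ·x_{i+t}) + Σ_{i=0}^{m-1} xᵢ·x_{i+m}
          + γ(x₀+x_m, …, x_{m-1}+x_{2m-1})`
is rotation symmetric and has algebraic degree `d`. -/
theorem statement4 (m t : ℕ) (hm : 1 ≤ m) [NeZero m]
    (ht1 : 1 ≤ t) (ht2 : t ≤ m - 1) (hodd : Odd (m / Nat.gcd m t))
    (d : ℕ) (hd : 3 ≤ d)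
    (γ : (ZMod m → ZMod 2) → ZMod 2)
    (hγrot : RotationSymmetric γ) (hγdeg : HasAlgebraicDegree γ d)
    (f : (ZMod (2 * m) → ZMod 2) → ZMod 2)
    (hf : ∀ x : ZMod (2 * m) → ZMod 2,
      f x = ∑ i ∈ Finset.range (2 * m), (x i * x (i + t) * x (i + m) + x i * x (i + t)) +
        ∑ i ∈ Finset.range m, x i * x (i + m) +
        γ (fun j : ZMod m => x j.val + x (j.val + m : ZMod (2 * m)))) :
    RotationSymmetric f ∧ HasAlgebraicDegree f d := by
  constructor
  · exact statement4_part1 m t hm ht1 ht2 γ hγrot f hf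
  · exact statement4_part2 m t hm ht1 ht2 d hd γ hγdeg f hf
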